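/- The derivation d of the infinite-dimensional Grassmann (exterior) algebra E over ℚ on generators e_1, e_2, e_3, …, determined by d(e_1) = 0 and d(e_{i+1}) = e_i for all i ≥ 1, is surjective. -/
import Mathlib

section Aux

variable {E : Type*} [Ring E] [Algebra ℚ E] (d : E → E)

lemma aux_d0 (hadd : ∀ x y, d (x + y) = d x + d y) : d 0 = 0 := by
  have h := hadd 0 0
  rw [add_zero] at h
  have h' : d 0 + 0 = d 0 + d 0 := by rw [add_zero]; exact h
  exact (add_left_cancel h').symm

lemma aux_dsub (hadd : ∀ x y, d (x + y) = d x + d y) (x y : E) :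
    d (x - y) = d x - d y := by
  have h := hadd (x - y) y
  rw [sub_add_cancel] at h
  exact eq_sub_of_add_eq h.symm

lemma aux_iter_add (hadd : ∀ x y, d (x + y) = d x + d y) :
    ∀ n, ∀ x y : E, d^[n] (x + y) = d^[n] x + d^[n] y := by
  intro n
  induction n with
  | zero => intro x y; simp
  | succ n ih =>
    intro x y
    rw [Function.iterate_succ_apply, Function.iterate_succ_apply,
      Function.iterate_succ_apply, hadd, ih]

lemma aux_iter_zero (hadd : ∀ x y, d (x + y) = d x + d y) :
    ∀ n, d^[n] (0 : E) = 0 := by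
  intro n
  induction n with
  | zero => simp
  | succ n ih => rw [Function.iterate_succ_apply, aux_d0 d hadd]; exact ih

lemma aux_iter_smul (hsmul : ∀ (q : ℚ) x, d (q • x) = q • d x) :
    ∀ n (q : ℚ) (x : E), d^[n] (q • x) = q • d^[n] x := by
  intro n
  induction n with
  | zero => intro q x; simp
  | succ n ih =>
    intro q x
    rw [Function.iterate_succ_apply, Function.iterate_succ_apply, hsmul, ih]

lemma aux_nilp_mul (hadd : ∀ x y, d (x + y) = d x + d y)
    (hleib : ∀ x y, d (x * y) = d x * y + x * d y) :
    ∀ N n m (x y : E), n + m ≤ N → d^[n] x = 0 → d^[m] y = 0 →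
      d^[n + m] (x * y) = 0 := by
  intro N
  induction N with
  | zero =>
    intro n m x y hle hx hy
    obtain rfl : n = 0 := by omega
    obtain rfl : m = 0 := by omega
    simp only [Function.iterate_zero_apply] at hx hy ⊢
    rw [hx, zero_mul]
    rfl
  | succ N ih =>
    intro n m x y hle hx hy
    cases n with
    | zero =>
      simp only [Function.iterate_zero_apply] at hx
      rw [hx, zero_mul]
      exact aux_iter_zero d hadd _
    | succ n =>
      cases m with
      | zero =>
        simp only [Function.iterate_zero_apply] at hy
        rw [hy, mul_zero]
        exact aux_iter_zero d hadd _
      | succ m =>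
        have h1 : d^[n] (d x) = 0 := by
          rw [← Function.iterate_succ_apply]; exact hx
        have h2 : d^[m] (d y) = 0 := by
          rw [← Function.iterate_succ_apply]; exact hy
        have e1 : d^[n + (m + 1)] (d x * y) = 0 :=
          ih n (m + 1) (d x) y (by omega) h1 hy
        have e2 : d^[(n + 1) + m] (x * d y) = 0 :=
          ih (n + 1) m x (d y) (by omega) hx h2
        have hidx : (n + 1) + (m + 1) = (n + (m + 1)) + 1 := by omega
        rw [hidx, Function.iterate_succ_apply, hleib, aux_iter_add d hadd, e1,
          zero_add, show n + (m + 1) = (n + 1) + m from by omega]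
        exact e2

end Aux

/-- The derivation of the infinite-dimensional Grassmann (exterior) algebra over `ℚ` on
generators `e 0, e 1, e 2, …`, determined by `d (e 0) = 0` and `d (e (i+1)) = e i`, maps the
non-unital subalgebra generated by the generators (the "non-unital part" of the Grassmann
algebra) onto itself. -/
theorem stmt5
    (e : ℕ → ExteriorAlgebra ℚ (ℕ → ℚ))
    (he : ∀ i, e i = ExteriorAlgebra.ι ℚ (Pi.single i 1))
    (d : ExteriorAlgebra ℚ (ℕ → ℚ) → ExteriorAlgebra ℚ (ℕ → ℚ))
    (hadd : ∀ x y, d (x + y) = d x + d y)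
    (hsmul : ∀ (q : ℚ) x, d (q • x) = q • d x)
    (hleib : ∀ x y, d (x * y) = d x * y + x * d y)
    (h0 : d (e 0) = 0)
    (hsucc : ∀ i, d (e (i + 1)) = e i) :
    ∀ x ∈ NonUnitalAlgebra.adjoin ℚ (Set.range e),
      ∃ y ∈ NonUnitalAlgebra.adjoin ℚ (Set.range e), d y = x := by
  set A := NonUnitalAlgebra.adjoin ℚ (Set.range e) with hA
  have heA : ∀ i, e i ∈ A := fun i =>
    NonUnitalAlgebra.subset_adjoin ℚ (Set.mem_range_self i)
  -- d maps A into A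
  have dA : ∀ x ∈ A, d x ∈ A := by
    intro x hx
    induction hx using NonUnitalAlgebra.adjoin_induction with
    | mem x hx =>
      obtain ⟨i, rfl⟩ := hx
      cases i with
      | zero => rw [h0]; exact zero_mem A
      | succ i => rw [hsucc]; exact heA i
    | add x y hx hy ihx ihy => rw [hadd]; exact add_mem ihx ihy
    | zero => rw [aux_d0 d hadd]; exact zero_mem A
    | mul x y hx hy ihx ihy =>
      rw [hleib]; exact add_mem (mul_mem ihx hy) (mul_mem hx ihy)
    | smul q x hx ihx => rw [hsmul]; exact SMulMemClass.smul_mem q ihx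
  -- nilpotency of d on each generator
  have nilp_e : ∀ i, d^[i + 1] (e i) = 0 := by
    intro i
    induction i with
    | zero => simpa using h0
    | succ i ih => rw [Function.iterate_succ_apply, hsucc]; exact ih
  -- d is locally nilpotent on A
  have nil : ∀ x ∈ A, ∃ n, d^[n] x = 0 := by
    intro x hx
    induction hx using NonUnitalAlgebra.adjoin_induction with
    | mem x hx => obtain ⟨i, rfl⟩ := hx; exact ⟨i + 1, nilp_e i⟩
    | add x y hx hy ihx ihy =>
      obtain ⟨n1, h1⟩ := ihx
      obtain ⟨n2, h2⟩ := ihy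
      refine ⟨n1 + n2, ?_⟩
      have m1 : ∀ k, d^[n1 + k] x = 0 := by
        intro k
        induction k with
        | zero => exact h1
        | succ k ih =>
          rw [show n1 + (k + 1) = (n1 + k) + 1 from rfl,
            Function.iterate_succ_apply', ih, aux_d0 d hadd]
      have m2 : ∀ k, d^[n2 + k] y = 0 := by
        intro k
        induction k with
        | zero => exact h2
        | succ k ih =>
          rw [show n2 + (k + 1) = (n2 + k) + 1 from rfl,
            Function.iterate_succ_apply', ih, aux_d0 d hadd]
      rw [aux_iter_add d hadd, m1 n2, show n1 + n2 = n2 + n1 from by omega,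
        m2 n1, add_zero]
    | zero => exact ⟨0, rfl⟩
    | mul x y hx hy ihx ihy =>
      obtain ⟨n1, h1⟩ := ihx
      obtain ⟨n2, h2⟩ := ihy
      exact ⟨n1 + n2, aux_nilp_mul d hadd hleib (n1 + n2) n1 n2 x y le_rfl h1 h2⟩
    | smul q x hx ihx =>
      obtain ⟨n, hn⟩ := ihx
      exact ⟨n, by rw [aux_iter_smul d hsmul, hn, smul_zero]⟩
  -- key lemma: e i * z is in the image of d (restricted to A)
  have L : ∀ n i z, z ∈ A → d^[n] z = 0 → ∃ w ∈ A, d w = e i * z := by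
    intro n
    induction n with
    | zero =>
      intro i z hz h
      simp only [Function.iterate_zero_apply] at h
      subst h
      exact ⟨0, zero_mem A, by rw [aux_d0 d hadd, mul_zero]⟩
    | succ n ih =>
      intro i z hz h
      obtain ⟨w, hwA, hw⟩ := ih (i + 1) (d z) (dA z hz)
        (by rw [← Function.iterate_succ_apply]; exact h)
      refine ⟨e (i + 1) * z - w, sub_mem (mul_mem (heA _) hz) hwA, ?_⟩
      rw [aux_dsub d hadd, hleib, hsucc, hw]
      abel
  -- products x * z with x, z ∈ A are in the image
  have L2 : ∀ x ∈ A, ∀ z ∈ A, ∃ w ∈ A, d w = x * z := by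
    intro x hx
    induction hx using NonUnitalAlgebra.adjoin_induction with
    | mem x hx =>
      obtain ⟨i, rfl⟩ := hx
      intro z hz
      obtain ⟨n, hn⟩ := nil z hz
      exact L n i z hz hn
    | zero =>
      intro z hz
      exact ⟨0, zero_mem A, by rw [aux_d0 d hadd, zero_mul]⟩
    | add x y hx hy ihx ihy =>
      intro z hz
      obtain ⟨w1, h1A, h1⟩ := ihx z hz
      obtain ⟨w2, h2A, h2⟩ := ihy z hz
      exact ⟨w1 + w2, add_mem h1A h2A, by rw [hadd, h1, h2, add_mul]⟩
    | mul x y hx hy ihx ihy =>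
      intro z hz
      obtain ⟨w, hwA, hw⟩ := ihx (y * z) (mul_mem hy hz)
      exact ⟨w, hwA, by rw [hw, mul_assoc]⟩
    | smul q x hx ihx =>
      intro z hz
      obtain ⟨w, hwA, hw⟩ := ihx z hz
      exact ⟨q • w, SMulMemClass.smul_mem q hwA,
        by rw [hsmul, hw, smul_mul_assoc]⟩
  -- main induction
  intro x hx
  induction hx using NonUnitalAlgebra.adjoin_induction with
  | mem x hx =>
    obtain ⟨i, rfl⟩ := hx
    exact ⟨e (i + 1), heA _, hsucc i⟩
  | zero => exact ⟨0, zero_mem A, aux_d0 d hadd⟩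
  | add x y hx hy ihx ihy =>
    obtain ⟨w1, h1A, h1⟩ := ihx
    obtain ⟨w2, h2A, h2⟩ := ihy
    exact ⟨w1 + w2, add_mem h1A h2A, by rw [hadd, h1, h2]⟩
  | mul x y hx hy ihx ihy => exact L2 x hx y hy
  | smul q x hx ihx =>
    obtain ⟨w, hwA, hw⟩ := ihx
    exact ⟨q • w, SMulMemClass.smul_mem q hwA, by rw [hsmul, hw]⟩
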